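/- Let f : S¹ → ℝ⁺ be a probability density on the unit circle, p ∈ S¹, α ∈ (0,1], φ ∈ (0,π), and let μ be the probability measure with density f. If f satisfies property P(p,α,φ), then the mean of μ in the normal chart centered at p satisfies |m(μ_p)| ≤ φ + ((1−α)/(4π))(π − φ)². -/

import Mathlib

open MeasureTheory Real Set Filter

noncomputable section

/-- The unit circle `S¹` in `ℝ² ≃ ℂ`. -/
abbrev S1 := {x : ℂ // ‖x‖ = 1}

/-- The arclength distance on `S¹`. -/
def dS1 (x p : S1) : ℝ := 2 * Real.arcsin (‖(x : ℂ) - (p : ℂ)‖ / 2)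

/-- The Fréchet functional of a measure `μ` on `S¹`. -/
def frechet (μ : Measure S1) (p : S1) : ℝ := (1/2) * ∫ x, (dS1 x p)^2 ∂μ

/-- The normal coordinate chart centered at `p`: `θ ↦ R_θ p`. -/
def chart (p : S1) (θ : ℝ) : S1 :=
  ⟨Complex.exp (θ * Complex.I) * (p : ℂ), by
    rw [norm_mul, Complex.norm_exp_ofReal_mul_I, p.2, mul_one]⟩

/-- The inverse chart, with values in `[-π, π)`. -/
def invChart (p₀ : S1) (p : S1) : ℝ :=
  if Complex.arg ((p : ℂ) / (p₀ : ℂ)) = π then -π else Complex.arg ((p : ℂ) / (p₀ : ℂ))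

/-- The image measure `μ_{p₀}` of `μ` in the normal chart centered at `p₀`. -/
def chartMeasure (μ : Measure S1) (p₀ : S1) : Measure ℝ := Measure.map (invChart p₀) μ

/-- `m(μ_{p₀})`, the Euclidean mean of the image measure in the chart centered at `p₀`. -/
def mMean (μ : Measure S1) (p₀ : S1) : ℝ := ∫ t, t ∂(chartMeasure μ p₀)

/-- The antipodal point (cut locus) of `p`. -/
def antipode (p : S1) : S1 := ⟨-(p : ℂ), by rw [norm_neg]; exact p.2⟩

/-- The (left-continuous extension of the) derivative of `θ ↦ F_μ(e_{p₀}(θ))`. -/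
def extDerivS1 (μ : Measure S1) (p₀ : S1) (θ : ℝ) : ℝ :=
  if 0 ≤ θ then θ - 2*π*(chartMeasure μ p₀ (Ico (-π) (-π+θ))).toReal - mMean μ p₀
  else θ + 2*π*(chartMeasure μ p₀ (Ico (π+θ) π)).toReal - mMean μ p₀

def basePt : S1 := ⟨1, by norm_num⟩

/-- The (unnormalized) arclength measure on `S¹`, of total mass `2π`. -/
def arcMeasure : Measure S1 := Measure.map (chart basePt) (volume.restrict (Ico (-π) π))

/-- Property `P(p, α, φ)` for a density `f` on `S¹`. -/
def propP (f : S1 → ℝ) (p : S1) (α φ : ℝ) : Prop :=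
  ∀ θ ∈ Ico (-π) π, φ ≤ |θ| → f (chart p θ) ≤ (1 - α)/(2*π)

instance : BorelSpace S1 := Subtype.borelSpace {x : ℂ | ‖x‖ = 1}

lemma S1.coe_ne_zero (p : S1) : (p : ℂ) ≠ 0 := by
  intro h
  have := p.2
  rw [h] at this
  simp at this

lemma chart_coe (p : S1) (θ : ℝ) : (chart p θ : ℂ) = Complex.exp (θ * Complex.I) * p := rfl

lemma continuous_chart (p : S1) : Continuous (chart p) := by
  apply Continuous.subtype_mk
  exact (Complex.continuous_exp.comp (by continuity)).mul continuous_const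

lemma measurable_chart (p : S1) : Measurable (chart p) := (continuous_chart p).measurable

lemma measurable_invChart (p : S1) : Measurable (invChart p) := by
  have hg : Measurable fun x : S1 => Complex.arg ((x : ℂ) / (p : ℂ)) :=
    Complex.measurable_arg.comp (continuous_subtype_val.measurable.div_const _)
  unfold invChart
  exact Measurable.ite (hg (measurableSet_singleton π)) measurable_const hg

lemma invChart_mem (p x : S1) : invChart p x ∈ Ico (-π) π := by
  unfold invChart
  split_ifs with hc
  · exact ⟨le_refl _, by linarith [Real.pi_pos]⟩
  · exact ⟨(Complex.neg_pi_lt_arg _).le,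
      lt_of_le_of_ne (Complex.arg_le_pi _) hc⟩

lemma invChart_chart (p : S1) {θ : ℝ} (hθ : θ ∈ Ico (-π) π) : invChart p (chart p θ) = θ := by
  have hdiv : ((chart p θ : ℂ) / (p : ℂ)) = Complex.exp (θ * Complex.I) := by
    rw [chart_coe, mul_div_assoc, div_self (S1.coe_ne_zero p), mul_one]
  rcases eq_or_lt_of_le hθ.1 with h | h
  · have he : Complex.exp ((θ : ℂ) * Complex.I) = -1 := by
      rw [← h]
      push_cast
      rw [neg_mul, Complex.exp_neg, Complex.exp_pi_mul_I]
      norm_num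
    unfold invChart
    rw [hdiv, he, Complex.arg_neg_one, if_pos rfl, ← h]
  · have harg : Complex.arg (Complex.exp ((θ : ℂ) * Complex.I)) = θ := by
      rw [Complex.exp_mul_I]
      exact_mod_cast Complex.arg_cos_add_sin_mul_I ⟨h, hθ.2.le⟩
    unfold invChart
    rw [hdiv, harg, if_neg (ne_of_lt hθ.2)]

lemma chart_eq_basePt (p : S1) (θ : ℝ) :
    chart p θ = chart basePt (θ + Complex.arg p) := by
  apply Subtype.ext
  rw [chart_coe, chart_coe]
  show _ = _ * ((1 : ℂ))
  rw [mul_one]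
  push_cast
  rw [add_mul, Complex.exp_add]
  congr 1
  have hab : (‖(p : ℂ)‖ : ℂ) = 1 := by
    rw [p.2, Complex.ofReal_one]
  conv_lhs => rw [← Complex.norm_mul_exp_arg_mul_I (p : ℂ)]
  rw [hab, one_mul]

lemma chart_periodic (p : S1) : Function.Periodic (chart p) (2 * π) := by
  intro θ
  apply Subtype.ext
  rw [chart_coe, chart_coe]
  congr 1
  push_cast
  rw [add_mul, Complex.exp_add]
  have : (2 : ℂ) * π * Complex.I = 2 * ↑π * Complex.I := by ring
  rw [Complex.exp_two_pi_mul_I, mul_one]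

lemma volume_inter_Ico_shift {T : Set ℝ} (hT : MeasurableSet T)
    (hTp : ∀ x, x + 2 * π ∈ T ↔ x ∈ T) {c c' : ℝ} (h1 : c' ≤ c) (h2 : c ≤ c' + 2 * π) :
    volume (T ∩ Ico c (c + 2 * π)) = volume (T ∩ Ico c' (c' + 2 * π)) := by
  have h3 : c' + 2 * π ≤ c + 2 * π := by linarith
  have hA : MeasurableSet (T ∩ Ico c' c) := hT.inter measurableSet_Ico
  have hB : MeasurableSet (T ∩ Ico c (c' + 2 * π)) := hT.inter measurableSet_Ico
  have hC : MeasurableSet (T ∩ Ico (c' + 2 * π) (c + 2 * π)) := hT.inter measurableSet_Ico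
  have eqR : T ∩ Ico c' (c' + 2 * π) = (T ∩ Ico c' c) ∪ (T ∩ Ico c (c' + 2 * π)) := by
    rw [← inter_union_distrib_left, Ico_union_Ico_eq_Ico h1 h2]
  have eqL : T ∩ Ico c (c + 2 * π) = (T ∩ Ico c (c' + 2 * π)) ∪ (T ∩ Ico (c' + 2 * π) (c + 2 * π)) := by
    rw [← inter_union_distrib_left, Ico_union_Ico_eq_Ico h2 h3]
  have dR : Disjoint (T ∩ Ico c' c) (T ∩ Ico c (c' + 2 * π)) :=
    (Set.Ico_disjoint_Ico_same (a := c') (b := c) (c := c' + 2*π)).mono inter_subset_right inter_subset_right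
  have dL : Disjoint (T ∩ Ico c (c' + 2 * π)) (T ∩ Ico (c' + 2 * π) (c + 2 * π)) :=
    (Set.Ico_disjoint_Ico_same (a := c) (b := c' + 2*π) (c := c + 2*π)).mono inter_subset_right inter_subset_right
  have hCA : T ∩ Ico (c' + 2 * π) (c + 2 * π) = (fun x => x + -(2 * π)) ⁻¹' (T ∩ Ico c' c) := by
    ext x
    simp only [mem_inter_iff, mem_preimage, mem_Ico]
    constructor
    · rintro ⟨hx, h4, h5⟩
      refine ⟨by rw [← hTp]; simpa using hx, by linarith, by linarith⟩
    · rintro ⟨hx, h4, h5⟩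
      refine ⟨by rw [← hTp (x + -(2*π))] at hx; simpa using hx, by linarith, by linarith⟩
  have hvCA : volume (T ∩ Ico (c' + 2 * π) (c + 2 * π)) = volume (T ∩ Ico c' c) := by
    rw [hCA, measure_preimage_add_right]
  rw [eqL, eqR, measure_union dL hC, measure_union dR hB, hvCA]
  ring

lemma map_basePt_Ico (a : ℝ) (ha : -π ≤ a) (ha' : a ≤ π) :
    Measure.map (chart basePt) (volume.restrict (Ico (-π + a) (-π + a + 2 * π)))
      = Measure.map (chart basePt) (volume.restrict (Ico (-π) (-π + 2 * π))) := by
  ext s hs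
  rw [Measure.map_apply (measurable_chart _) hs, Measure.map_apply (measurable_chart _) hs,
    Measure.restrict_apply (measurable_chart _ hs), Measure.restrict_apply (measurable_chart _ hs)]
  set T := chart basePt ⁻¹' s with hTdef
  have hT : MeasurableSet T := measurable_chart _ hs
  have hTp : ∀ x, x + 2 * π ∈ T ↔ x ∈ T := by
    intro x
    simp only [hTdef, mem_preimage, chart_periodic basePt x]
  rcases le_or_gt 0 a with h0 | h0
  · exact volume_inter_Ico_shift hT hTp (by linarith) (by linarith)
  · exact (volume_inter_Ico_shift hT hTp (by linarith) (by linarith)).symm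

lemma arcMeasure_eq (p : S1) :
    arcMeasure = Measure.map (chart p) (volume.restrict (Ico (-π) π)) := by
  set a := Complex.arg (p : ℂ) with hadef
  have ha : -π < a := Complex.neg_pi_lt_arg _
  have ha' : a ≤ π := Complex.arg_le_pi _
  have hc : chart p = (chart basePt) ∘ (fun θ => θ + a) := by
    funext θ
    exact chart_eq_basePt p θ
  rw [hc, ← Measure.map_map (measurable_chart _) (measurable_add_const a)]
  have hmap : Measure.map (fun θ => θ + a) (volume.restrict (Ico (-π) π))
      = volume.restrict (Ico (-π + a) (π + a)) := by
    have h := Measure.restrict_map (μ := volume) (measurable_add_const a)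
      (s := Ico (-π + a) (π + a)) measurableSet_Ico
    rw [map_add_right_eq_self volume a, preimage_add_const_Ico] at h
    have h0 : Ico (-π + a - a) (π + a - a) = Ico (-π) π := by congr 1 <;> ring
    rw [h0] at h
    exact h.symm
  rw [hmap]
  have h2 : Ico (-π + a) (π + a) = Ico (-π + a) (-π + a + 2 * π) := by congr 1; ring
  have h3 : Ico (-π) π = Ico (-π) (-π + 2 * π) := by congr 1; ring
  rw [h2]
  rw [show arcMeasure = Measure.map (chart basePt) (volume.restrict (Ico (-π) (-π + 2 * π))) by
    rw [arcMeasure, ← h3]]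
  exact (map_basePt_Ico a ha.le ha').symm

lemma intInt_max (c : ℝ) : ∀ a b : ℝ, IntervalIntegrable (fun θ => max (θ - c) 0) volume a b :=
  fun a b => ((continuous_id.sub continuous_const).max continuous_const).intervalIntegrable a b

lemma intInt_maxneg (c : ℝ) : ∀ a b : ℝ, IntervalIntegrable (fun θ => max (-θ - c) 0) volume a b :=
  fun a b => ((continuous_neg.sub continuous_const).max continuous_const).intervalIntegrable a b

lemma integral_max_sub {φ : ℝ} (hφ0 : 0 < φ) (hφ : φ < π) :
    ∫ θ in Ico (-π) π, max (θ - φ) 0 = (π - φ) ^ 2 / 2 := by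
  have hπ := Real.pi_pos
  rw [MeasureTheory.integral_Ico_eq_integral_Ioo, ← MeasureTheory.integral_Ioc_eq_integral_Ioo,
    ← intervalIntegral.integral_of_le (by linarith : -π ≤ π)]
  rw [← intervalIntegral.integral_add_adjacent_intervals (b := φ) (intInt_max φ _ _) (intInt_max φ _ _)]
  have e1 : ∫ θ in (-π)..φ, max (θ - φ) 0 = 0 := by
    have : ∫ θ in (-π)..φ, max (θ - φ) 0 = ∫ _ in (-π)..φ, (0:ℝ) := by
      apply intervalIntegral.integral_congr
      intro x hx
      rw [uIcc_of_le (by linarith)] at hx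
      exact max_eq_right (by linarith [hx.2])
    simpa using this
  have e2 : ∫ θ in φ..π, max (θ - φ) 0 = (π - φ) ^ 2 / 2 := by
    have : ∫ θ in φ..π, max (θ - φ) 0 = ∫ θ in φ..π, (θ - φ) := by
      apply intervalIntegral.integral_congr
      intro x hx
      rw [uIcc_of_le (by linarith)] at hx
      exact max_eq_left (by linarith [hx.1])
    have hsub : ∫ θ in φ..π, (θ - φ) =
        (∫ θ in φ..π, (θ : ℝ)) - ∫ _ in φ..π, (φ : ℝ) :=
      intervalIntegral.integral_sub (continuous_id.intervalIntegrable _ _) intervalIntegrable_const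
    rw [this, hsub, integral_id, intervalIntegral.integral_const, smul_eq_mul]
    ring
  rw [e1, e2, zero_add]

lemma integral_max_negsub {φ : ℝ} (hφ0 : 0 < φ) (hφ : φ < π) :
    ∫ θ in Ico (-π) π, max (-θ - φ) 0 = (π - φ) ^ 2 / 2 := by
  have hπ := Real.pi_pos
  rw [MeasureTheory.integral_Ico_eq_integral_Ioo, ← MeasureTheory.integral_Ioc_eq_integral_Ioo,
    ← intervalIntegral.integral_of_le (by linarith : -π ≤ π)]
  rw [← intervalIntegral.integral_add_adjacent_intervals (b := -φ) (intInt_maxneg φ _ _) (intInt_maxneg φ _ _)]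
  have e1 : ∫ θ in (-φ)..π, max (-θ - φ) 0 = 0 := by
    have : ∫ θ in (-φ)..π, max (-θ - φ) 0 = ∫ _ in (-φ)..π, (0:ℝ) := by
      apply intervalIntegral.integral_congr
      intro x hx
      rw [uIcc_of_le (by linarith)] at hx
      exact max_eq_right (by linarith [hx.1])
    simpa using this
  have e2 : ∫ θ in (-π)..(-φ), max (-θ - φ) 0 = (π - φ) ^ 2 / 2 := by
    have : ∫ θ in (-π)..(-φ), max (-θ - φ) 0 = ∫ θ in (-π)..(-φ), (-θ - φ) := by
      apply intervalIntegral.integral_congr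
      intro x hx
      rw [uIcc_of_le (by linarith)] at hx
      exact max_eq_left (by linarith [hx.2])
    have hsub : ∫ θ in (-π)..(-φ), (-θ - φ) =
        (∫ θ in (-π)..(-φ), (-θ : ℝ)) - ∫ _ in (-π)..(-φ), (φ:ℝ) :=
      intervalIntegral.integral_sub ((continuous_id.neg).intervalIntegrable _ _) intervalIntegrable_const
    rw [this, hsub, intervalIntegral.integral_neg, integral_id, intervalIntegral.integral_const,
      smul_eq_mul]
    ring
  rw [e1, e2, add_zero]

lemma key_real_bound (G : ℝ → ℝ)
    (hGsm : AEStronglyMeasurable G (volume.restrict (Ico (-π) π)))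
    (hG0 : ∀ᵐ θ ∂(volume.restrict (Ico (-π) π)), 0 ≤ G θ)
    (hGint : IntegrableOn G (Ico (-π) π) volume)
    (hGone : ∫ θ in Ico (-π) π, G θ = 1)
    {c φ : ℝ} (hc : 0 ≤ c) (hφ0 : 0 < φ) (hφ : φ < π)
    (hGbd : ∀ᵐ θ ∂(volume.restrict (Ico (-π) π)), φ ≤ |θ| → G θ ≤ c) :
    |∫ θ in Ico (-π) π, θ * G θ| ≤ φ + c * ((π - φ) ^ 2 / 2) := by
  have hπ := Real.pi_pos
  have hmem : ∀ᵐ θ ∂(volume.restrict (Ico (-π) π)), θ ∈ Ico (-π) π :=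
    ae_restrict_mem measurableSet_Ico
  have hmax_int : IntegrableOn (fun θ => max (θ - φ) 0) (Ico (-π) π) volume :=
    (((continuous_id.sub continuous_const).max continuous_const).integrableOn_Icc).mono_set
      Ico_subset_Icc_self
  have hmaxneg_int : IntegrableOn (fun θ => max (-θ - φ) 0) (Ico (-π) π) volume :=
    (((continuous_neg.sub continuous_const).max continuous_const).integrableOn_Icc).mono_set
      Ico_subset_Icc_self
  have h1 : Integrable (fun θ => θ * G θ) (volume.restrict (Ico (-π) π)) := by
    apply Integrable.mono' (hGint.abs.const_mul π)
      (measurable_id.aestronglyMeasurable.mul hGsm)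
    filter_upwards [hmem] with θ hθ
    show ‖θ * G θ‖ ≤ π * |G θ|
    rw [norm_mul, Real.norm_eq_abs, Real.norm_eq_abs]
    have : |θ| ≤ π := abs_le.2 ⟨hθ.1, hθ.2.le⟩
    exact mul_le_mul_of_nonneg_right this (abs_nonneg _)
  have hrhs1 : Integrable (fun θ => φ * G θ + c * max (θ - φ) 0)
      (volume.restrict (Ico (-π) π)) := (hGint.const_mul φ).add (hmax_int.const_mul c)
  have hrhs2 : Integrable (fun θ => φ * G θ + c * max (-θ - φ) 0)
      (volume.restrict (Ico (-π) π)) := (hGint.const_mul φ).add (hmaxneg_int.const_mul c)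
  have hub : ∫ θ in Ico (-π) π, θ * G θ ≤ φ + c * ((π - φ) ^ 2 / 2) := by
    have hmono : ∫ θ in Ico (-π) π, θ * G θ
        ≤ ∫ θ in Ico (-π) π, (φ * G θ + c * max (θ - φ) 0) := by
      apply integral_mono_ae h1 hrhs1
      filter_upwards [hmem, hG0, hGbd] with θ hθ h0 hbd
      rcases le_or_gt θ φ with h | h
      · have : c * max (θ - φ) 0 ≥ 0 := mul_nonneg hc (le_max_right _ _)
        nlinarith [mul_le_mul_of_nonneg_right h h0]
      · have hbd' : G θ ≤ c := hbd (by rw [abs_of_pos (by linarith)]; linarith)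
        rw [max_eq_left (by linarith)]
        nlinarith
    rw [integral_add (hGint.const_mul φ) (hmax_int.const_mul c), integral_const_mul,
      integral_const_mul, hGone, mul_one, integral_max_sub hφ0 hφ] at hmono
    exact hmono
  have hlb : -(∫ θ in Ico (-π) π, θ * G θ) ≤ φ + c * ((π - φ) ^ 2 / 2) := by
    rw [← integral_neg]
    have hmono : ∫ θ in Ico (-π) π, -(θ * G θ)
        ≤ ∫ θ in Ico (-π) π, (φ * G θ + c * max (-θ - φ) 0) := by
      apply integral_mono_ae h1.neg hrhs2
      filter_upwards [hmem, hG0, hGbd] with θ hθ h0 hbd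
      show -(θ * G θ) ≤ φ * G θ + c * max (-θ - φ) 0
      rcases le_or_gt (-θ) φ with h | h
      · have : c * max (-θ - φ) 0 ≥ 0 := mul_nonneg hc (le_max_right _ _)
        nlinarith [mul_le_mul_of_nonneg_right h h0]
      · have hbd' : G θ ≤ c := hbd (by rw [abs_of_neg (by linarith)]; linarith)
        rw [max_eq_left (by linarith)]
        nlinarith
    rw [integral_add (hGint.const_mul φ) (hmaxneg_int.const_mul c), integral_const_mul,
      integral_const_mul, hGone, mul_one, integral_max_negsub hφ0 hφ] at hmono
    exact hmono
  exact abs_le.2 ⟨by linarith, hub⟩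


/-- Lemma `lemme.properties` (3): if the density `f` of `μ` satisfies
`P(p,α,φ)` then `|m(μ_p)| ≤ φ + (1-α)/(4π) · (π-φ)²`. -/
theorem propP_mean_bound (f : S1 → ℝ) (hf : ∀ x, 0 ≤ f x)
    (hprob : ∫ x, f x ∂arcMeasure = 1) (μ : Measure S1)
    (hμ : μ = arcMeasure.withDensity fun x => ENNReal.ofReal (f x))
    (p : S1) (α φ : ℝ) (hα₀ : 0 < α) (hα : α ≤ 1) (hφ₀ : 0 < φ) (hφ : φ < π)
    (h : propP f p α φ) :
    |mMean μ p| ≤ φ + (1 - α) / (4*π) * (π - φ)^2 := by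
  have hπ := Real.pi_pos
  -- f is integrable
  have hInt : Integrable f arcMeasure := by
    by_contra hni
    rw [integral_undef hni] at hprob
    norm_num at hprob
  have hsm : AEStronglyMeasurable f arcMeasure := hInt.aestronglyMeasurable
  -- measurable nonnegative version
  set F0 : S1 → NNReal := fun x => (hsm.mk f x).toNNReal with hF0def
  have hF0m : Measurable F0 := hsm.measurable_mk.real_toNNReal
  set F : S1 → ℝ := fun x => (F0 x : ℝ) with hFdef
  have hFm : Measurable F := hF0m.coe_nnreal_real
  have hFf : F =ᵐ[arcMeasure] f := by
    filter_upwards [hsm.ae_eq_mk] with x hx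
    have h0 : 0 ≤ hsm.mk f x := hx ▸ hf x
    simp only [hFdef, hF0def]
    rw [Real.coe_toNNReal _ h0, ← hx]
  -- rewrite μ
  have hμ' : μ = arcMeasure.withDensity fun x => ((F0 x : NNReal) : ENNReal) := by
    rw [hμ]
    apply withDensity_congr_ae
    filter_upwards [hFf] with x hx
    rw [← hx]
    simp only [hFdef]
    rw [ENNReal.ofReal_coe_nnreal]
  set ν := volume.restrict (Ico (-π) π) with hνdef
  set G : ℝ → ℝ := fun θ => F (chart p θ) with hGdef
  have hGm : Measurable G := hFm.comp (measurable_chart p)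
  have harc : arcMeasure = Measure.map (chart p) ν := arcMeasure_eq p
  -- Step 1 : mMean as integral over μ
  have e1 : mMean μ p = ∫ x, invChart p x ∂μ := by
    rw [mMean, chartMeasure]
    exact integral_map (measurable_invChart p).aemeasurable aestronglyMeasurable_id
  -- Step 2 : over arcMeasure
  have e2 : ∫ x, invChart p x ∂μ = ∫ x, F x * invChart p x ∂arcMeasure := by
    rw [hμ', integral_withDensity_eq_integral_smul hF0m]
    congr 1
  -- Step 3 : over ν
  have e3 : ∫ x, F x * invChart p x ∂arcMeasure
      = ∫ θ, F (chart p θ) * invChart p (chart p θ) ∂ν := by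
    rw [harc]
    exact integral_map (measurable_chart p).aemeasurable
      ((hFm.mul (measurable_invChart p)).aestronglyMeasurable)
  -- Step 4 : simplify invChart ∘ chart
  have e4 : ∫ θ, F (chart p θ) * invChart p (chart p θ) ∂ν = ∫ θ, θ * G θ ∂ν := by
    apply integral_congr_ae
    filter_upwards [ae_restrict_mem measurableSet_Ico] with θ hθ
    rw [invChart_chart p hθ, mul_comm]
  -- transfer hypotheses to G
  have hGint : IntegrableOn G (Ico (-π) π) volume := by
    have hIF : Integrable F arcMeasure := hInt.congr hFf.symm
    rw [harc] at hIF
    exact (integrable_map_measure hFm.aestronglyMeasurable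
      (measurable_chart p).aemeasurable).mp hIF
  have hGone : ∫ θ in Ico (-π) π, G θ = 1 := by
    have : ∫ x, F x ∂arcMeasure = 1 := by
      rw [integral_congr_ae hFf]; exact hprob
    rw [harc] at this
    rw [← this]
    exact (integral_map (measurable_chart p).aemeasurable hFm.aestronglyMeasurable).symm
  have hae : ∀ᵐ θ ∂ν, F (chart p θ) = f (chart p θ) := by
    rw [harc] at hFf
    exact ae_of_ae_map (measurable_chart p).aemeasurable hFf
  have hGbd : ∀ᵐ θ ∂ν, φ ≤ |θ| → G θ ≤ (1 - α)/(2*π) := by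
    filter_upwards [hae, ae_restrict_mem measurableSet_Ico] with θ heq hθ habs
    rw [hGdef]
    simp only []
    rw [heq]
    exact h θ hθ habs
  have hc : 0 ≤ (1 - α)/(2*π) := div_nonneg (by linarith) (by linarith)
  have key := key_real_bound G hGm.aestronglyMeasurable
    (Eventually.of_forall fun θ => NNReal.coe_nonneg _)
    hGint hGone hc hφ₀ hφ hGbd
  rw [e1, e2, e3, e4]
  calc |∫ θ in Ico (-π) π, θ * G θ| ≤ φ + (1 - α)/(2*π) * ((π - φ) ^ 2 / 2) := key
    _ = φ + (1 - α) / (4*π) * (π - φ)^2 := by field_simp; ring
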